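/- arXiv:2508.19561 — 2 statements merged into one kernel-verified Lean document; each statement's English description precedes it below -/
import Mathlib

section
/- Let α > 0, γ > 0 and c ∈ ℝ with c² > α², and set κ = √( α / (2(c² − α²)) ). Then the function u(x,t) = √(α/γ) · tanh( κ (x − c t) ) satisfies the cubic nonlinear Klein–Gordon equation u_tt − α² u_xx + α u − γ u³ = 0 for all (x,t) ∈ ℝ². -/
lemma hasDerivAt_tanh' (x : ℝ) :
    HasDerivAt Real.tanh (1 - Real.tanh x ^ 2) x := by
  have hc : Real.cosh x ≠ 0 := (Real.cosh_pos x).ne'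
  have h := (Real.hasDerivAt_sinh x).div (Real.hasDerivAt_cosh x) hc
  have heq : (fun y => Real.sinh y / Real.cosh y) = Real.tanh := by
    funext y; rw [Real.tanh_eq_sinh_div_cosh]
  rw [show (Real.sinh / Real.cosh) = Real.tanh from heq] at h
  refine h.congr_deriv ?_
  rw [Real.tanh_eq_sinh_div_cosh]
  have h1 := Real.cosh_sq_sub_sinh_sq x
  field_simp

/-- derivative of `s ↦ A * tanh (k*(x - c*s))` in `s`. -/
lemma kink_deriv (A k x c t : ℝ) :
    HasDerivAt (fun s => A * Real.tanh (k * (x - c * s)))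
      (A * ((1 - Real.tanh (k * (x - c * t)) ^ 2) * (k * (-c)))) t := by
  have h0 : HasDerivAt (fun s : ℝ => k * (x - c * s)) (k * (-c)) t := by
    have h1 : HasDerivAt (fun s : ℝ => x - c * s) (-(c * 1)) t :=
      ((hasDerivAt_id t).const_mul c).const_sub x
    simpa using h1.const_mul k
  exact ((hasDerivAt_tanh' (k * (x - c * t))).comp t h0).const_mul A

/-- second derivative of `s ↦ A * tanh (k*(x - c*s))` in `s`. -/
lemma kink_deriv2 (A k x c t : ℝ) :
    deriv (deriv (fun s => A * Real.tanh (k * (x - c * s)))) t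
      = A * k ^ 2 * c ^ 2 *
        (-2 * Real.tanh (k * (x - c * t)) * (1 - Real.tanh (k * (x - c * t)) ^ 2)) := by
  have hd1 : deriv (fun s => A * Real.tanh (k * (x - c * s)))
      = fun s => A * ((1 - Real.tanh (k * (x - c * s)) ^ 2) * (k * (-c))) := by
    funext s; exact (kink_deriv A k x c s).deriv
  rw [hd1]
  have h0 : HasDerivAt (fun s : ℝ => k * (x - c * s)) (k * (-c)) t := by
    have h1 : HasDerivAt (fun s : ℝ => x - c * s) (-(c * 1)) t :=
      ((hasDerivAt_id t).const_mul c).const_sub x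
    simpa using h1.const_mul k
  have htanh := (hasDerivAt_tanh' (k * (x - c * t))).comp t h0
  have hsq := htanh.pow 2
  have h2 : HasDerivAt (fun s => A * ((1 - Real.tanh (k * (x - c * s)) ^ 2) * (k * (-c))))
      (A * ((-((2 : ℕ) * Real.tanh (k * (x - c * t)) ^ (2 - 1) *
        ((1 - Real.tanh (k * (x - c * t)) ^ 2) * (k * (-c))))) * (k * (-c)))) t := by
    have := (((hasDerivAt_const t (1:ℝ)).sub hsq).mul_const (k * (-c))).const_mul A
    convert this using 2
    · rfl
    · rfl
    · simp [Function.comp]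
    · simp [Function.comp]
  rw [h2.deriv]; ring

/-- The traveling kink `u(x,t) = √(α/γ) tanh(κ(x − ct))` with
`κ = √(α/(2(c² − α²)))` solves the cubic nonlinear Klein–Gordon equation
`u_tt − α² u_xx + α u − γ u³ = 0` on all of `ℝ²`. -/
theorem klein_gordon_kink_solution
    (α γ c : ℝ) (hα : 0 < α) (hγ : 0 < γ) (hc : α ^ 2 < c ^ 2) :
    let κ := Real.sqrt (α / (2 * (c ^ 2 - α ^ 2)))
    let u : ℝ → ℝ → ℝ := fun x t => Real.sqrt (α / γ) * Real.tanh (κ * (x - c * t))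
    ∀ x t : ℝ,
      deriv (deriv (fun s => u x s)) t
        - α ^ 2 * deriv (deriv (fun y => u y t)) x
        + α * u x t - γ * (u x t) ^ 3 = 0 := by
  intro κ u x t
  have hden : 0 < c ^ 2 - α ^ 2 := by linarith
  have hκ2 : κ ^ 2 = α / (2 * (c ^ 2 - α ^ 2)) := by
    exact Real.sq_sqrt (by positivity)
  have hA2 : Real.sqrt (α / γ) ^ 2 = α / γ := Real.sq_sqrt (by positivity)
  set A := Real.sqrt (α / γ) with hA
  set T := Real.tanh (κ * (x - c * t)) with hT
  -- u_tt
  have h1 : deriv (deriv (fun s => u x s)) t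
      = A * κ ^ 2 * c ^ 2 * (-2 * T * (1 - T ^ 2)) := kink_deriv2 A κ x c t
  -- u_xx : rewrite u as function of x in the same shape, with roles swapped
  have hfun : (fun y => u y t) = fun y => A * Real.tanh (κ * ((-(c*t)) - (-1) * y)) := by
    funext y; simp only [u]
    rw [show κ * ((-(c*t)) - (-1) * y) = κ * (y - c * t) by ring]
  have h2 : deriv (deriv (fun y => u y t)) x
      = A * κ ^ 2 * ((-1:ℝ)) ^ 2 * (-2 * Real.tanh (κ * ((-(c*t)) - (-1) * x))
          * (1 - Real.tanh (κ * ((-(c*t)) - (-1) * x)) ^ 2)) := by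
    rw [hfun]; exact kink_deriv2 A κ (-(c*t)) (-1) x
  have harg : κ * ((-(c*t)) - (-1) * x) = κ * (x - c * t) := by ring
  rw [harg] at h2
  rw [h1, h2]
  show A * κ ^ 2 * c ^ 2 * (-2 * T * (1 - T ^ 2))
      - α ^ 2 * (A * κ ^ 2 * (-1:ℝ) ^ 2 * (-2 * T * (1 - T ^ 2)))
      + α * (A * T) - γ * (A * T) ^ 3 = 0
  have hκ2' : κ ^ 2 * (2 * (c ^ 2 - α ^ 2)) = α := by
    rw [hκ2]; field_simp
  have hA2' : A ^ 2 * γ = α := by rw [hA2]; field_simp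
  linear_combination (-(A * T ^ 3)) * hA2' + (-(A * T) * (1 - T ^ 2)) * hκ2'
end

section
/- Let 0 < γ < 1 and set s = √(1 − γ²). Then the kink–antikink function u(x,t) = 4 · arctan( sinh( γ t / s ) / ( γ · cosh( x / s ) ) ) satisfies the Sine-Gordon equation u_tt − u_xx + sin(u) = 0 for all (x,t) ∈ ℝ². -/
private lemma sin_four_arctan (r : ℝ) :
    Real.sin (4 * Real.arctan r) = 4 * r * (1 - r ^ 2) / (1 + r ^ 2) ^ 2 := by
  have h1 : (0:ℝ) < 1 + r ^ 2 := by positivity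
  have hs : Real.sqrt (1 + r ^ 2) ^ 2 = 1 + r ^ 2 := Real.sq_sqrt (by positivity)
  have hs0 : Real.sqrt (1 + r ^ 2) ≠ 0 := by positivity
  rw [show (4:ℝ) * Real.arctan r = 2 * (2 * Real.arctan r) by ring,
    Real.sin_two_mul, Real.sin_two_mul, Real.cos_two_mul, Real.sin_arctan, Real.cos_arctan]
  field_simp
  ring_nf
  rw [show Real.sqrt (1 + r ^ 2) ^ 4 = (Real.sqrt (1 + r ^ 2) ^ 2) ^ 2 by ring, hs]
  ring

/-- The kink–antikink function
`u(x,t) = 4 arctan( sinh(γt/√(1−γ²)) / (γ cosh(x/√(1−γ²))) )`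
solves the Sine-Gordon equation `u_tt − u_xx + sin u = 0` on all of `ℝ²`. -/
theorem sine_gordon_kink_antikink_solution
    (γ : ℝ) (hγ0 : 0 < γ) (hγ1 : γ < 1) :
    let s := Real.sqrt (1 - γ ^ 2)
    let u : ℝ → ℝ → ℝ := fun x t =>
      4 * Real.arctan (Real.sinh (γ * t / s) / (γ * Real.cosh (x / s)))
    ∀ x t : ℝ,
      deriv (deriv (fun τ => u x τ)) t
        - deriv (deriv (fun y => u y t)) x
        + Real.sin (u x t) = 0 := by
  intro s u x t
  have hγ2 : 0 < 1 - γ ^ 2 := by nlinarith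
  have hs0 : 0 < s := Real.sqrt_pos.mpr hγ2
  have hs2 : s ^ 2 = 1 - γ ^ 2 := Real.sq_sqrt hγ2.le
  have hsne : s ≠ 0 := hs0.ne'
  have hγne : γ ≠ 0 := hγ0.ne'
  have hC0 : (0:ℝ) < Real.cosh (x / s) := Real.cosh_pos _
  have hcne : γ * Real.cosh (x / s) ≠ 0 := by positivity
  have hcsq : (0:ℝ) < (γ * Real.cosh (x / s)) ^ 2 + Real.sinh (γ * t / s) ^ 2 := by
    have := pow_pos (mul_pos hγ0 hC0) 2
    nlinarith [sq_nonneg (Real.sinh (γ * t / s))]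
  have hA : ∀ τ : ℝ, HasDerivAt (fun τ : ℝ => γ * τ / s) (γ / s) τ := fun τ => by
    simpa using ((hasDerivAt_id τ).const_mul γ).div_const s
  have hB : ∀ y : ℝ, HasDerivAt (fun y : ℝ => y / s) (1 / s) y := fun y => by
    simpa using (hasDerivAt_id y).div_const s
  -- first derivative in t, clean form
  have hF1 : ∀ τ : ℝ, HasDerivAt (fun τ => u x τ)
      (4 * γ ^ 2 * Real.cosh (γ * τ / s) * Real.cosh (x / s) /
        (s * ((γ * Real.cosh (x / s)) ^ 2 + Real.sinh (γ * τ / s) ^ 2))) τ := by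
    intro τ
    have h := (((hA τ).sinh.div_const (γ * Real.cosh (x / s))).arctan).const_mul 4
    have hd : (0:ℝ) < 1 + (Real.sinh (γ * τ / s) / (γ * Real.cosh (x / s))) ^ 2 := by positivity
    refine h.congr_deriv ?_
    field_simp
  -- second derivative in t
  have hDne : s * ((γ * Real.cosh (x / s)) ^ 2 + Real.sinh (γ * t / s) ^ 2) ≠ 0 :=
    (mul_pos hs0 hcsq).ne'
  have hN := (((hA t).cosh.const_mul (4 * γ ^ 2)).mul_const (Real.cosh (x / s)))
  have hD := ((((hA t).sinh.pow 2).const_add ((γ * Real.cosh (x / s)) ^ 2)).const_mul s)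
  have hQ := hN.div hD hDne
  have key1 : deriv (deriv (fun τ => u x τ)) t =
      4 * γ ^ 3 * Real.sinh (γ * t / s) * Real.cosh (x / s) *
        ((γ * Real.cosh (x / s)) ^ 2 - Real.sinh (γ * t / s) ^ 2 - 2) /
        (s ^ 2 * ((γ * Real.cosh (x / s)) ^ 2 + Real.sinh (γ * t / s) ^ 2) ^ 2) := by
    have e1 : deriv (fun τ => u x τ) = fun τ =>
        4 * γ ^ 2 * Real.cosh (γ * τ / s) * Real.cosh (x / s) /
        (s * ((γ * Real.cosh (x / s)) ^ 2 + Real.sinh (γ * τ / s) ^ 2)) :=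
      funext fun τ => (hF1 τ).deriv
    rw [e1]
    refine hQ.deriv.trans ?_
    simp only [Pi.pow_apply]
    have hch : Real.cosh (γ * t / s) ^ 2 = Real.sinh (γ * t / s) ^ 2 + 1 := Real.cosh_sq _
    field_simp
    linear_combination (-2*Real.sinh (γ*t/s)) * hch
  -- first derivative in x, clean form
  have hF2 : ∀ y : ℝ, HasDerivAt (fun y => u y t)
      (-(4 * γ * Real.sinh (γ * t / s) * Real.sinh (y / s)) /
        (s * ((γ * Real.cosh (y / s)) ^ 2 + Real.sinh (γ * t / s) ^ 2))) y := by
    intro y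
    have hcy : (0:ℝ) < Real.cosh (y / s) := Real.cosh_pos _
    have hne : γ * Real.cosh (y / s) ≠ 0 := by positivity
    have h := (((hasDerivAt_const y (Real.sinh (γ * t / s))).div
      ((hB y).cosh.const_mul γ) hne).arctan).const_mul 4
    have hd : (0:ℝ) < 1 + (Real.sinh (γ * t / s) / (γ * Real.cosh (y / s))) ^ 2 := by positivity
    refine h.congr_deriv ?_
    simp only [Pi.div_apply]
    field_simp
    ring
  -- second derivative in x
  have hN2 := ((hB x).sinh.const_mul (4 * γ * Real.sinh (γ * t / s))).neg
  have hD2 := ((((hB x).cosh.const_mul γ).pow 2).add_const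
      (Real.sinh (γ * t / s) ^ 2)).const_mul s
  have hQ2 := hN2.div hD2 hDne
  have key2 : deriv (deriv (fun y => u y t)) x =
      4 * γ * Real.sinh (γ * t / s) * Real.cosh (x / s) *
        (γ ^ 2 * Real.cosh (x / s) ^ 2 - Real.sinh (γ * t / s) ^ 2 - 2 * γ ^ 2) /
        (s ^ 2 * ((γ * Real.cosh (x / s)) ^ 2 + Real.sinh (γ * t / s) ^ 2) ^ 2) := by
    have e2 : deriv (fun y => u y t) = fun y =>
        -(4 * γ * Real.sinh (γ * t / s) * Real.sinh (y / s)) /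
        (s * ((γ * Real.cosh (y / s)) ^ 2 + Real.sinh (γ * t / s) ^ 2)) :=
      funext fun y => (hF2 y).deriv
    rw [e2]
    refine hQ2.deriv.trans ?_
    simp only [Pi.pow_apply, Pi.neg_apply]
    have hsh : Real.sinh (x / s) ^ 2 = Real.cosh (x / s) ^ 2 - 1 := Real.sinh_sq _
    field_simp
    linear_combination (2*γ^2*Real.sinh (γ*t/s)*Real.cosh (x/s)) * hsh
  -- final assembly
  rw [key1, key2, show u x t = 4 * Real.arctan (Real.sinh (γ * t / s) /
      (γ * Real.cosh (x / s))) from rfl,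
    sin_four_arctan (Real.sinh (γ * t / s) / (γ * Real.cosh (x / s)))]
  field_simp
  linear_combination (4*γ*Real.sinh (γ*t/s)*Real.cosh (x/s)
    * (γ^2*Real.cosh (x/s)^2 - Real.sinh (γ*t/s)^2)) * hs2
end
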